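/- Hurwitz's 1-2-4-8 theorem: for n ≥ 1, there exist bilinear forms z_1, …, z_n in the variables x_1,…,x_n and y_1,…,y_n over ℝ satisfying the identity (x_1² + ⋯ + x_n²)·(y_1² + ⋯ + y_n²) = z_1² + ⋯ + z_n² (as an identity of real polynomials, equivalently for all real values of the x_i and y_j) if and only if n ∈ {1, 2, 4, 8}. -/

import Mathlib

set_option linter.unusedVariables false
set_option maxHeartbeats 1000000
open MvPolynomial

/-- A polynomial in the variables `x_1,…,x_n` (indexed by `Sum.inl`) and `y_1,…,y_n`
(indexed by `Sum.inr`) over ℝ is a *bilinear form* if it has the shape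
`∑_{i,j} a_{ij} x_i y_j`. -/
def IsBilinearForm (n : ℕ) (f : MvPolynomial (Fin n ⊕ Fin n) ℝ) : Prop :=
  ∃ a : Fin n → Fin n → ℝ,
    f = ∑ i, ∑ j, C (a i j) * X (Sum.inl i) * X (Sum.inr j)


set_option linter.unusedSectionVars false
set_option linter.unreachableTactic false
set_option linter.unusedTactic false

namespace Hurwitz
open Matrix

variable {m N : ℕ}

/-- ordered product of the matrices `B i` over a list of indices -/
def P (B : Fin m → Matrix (Fin N) (Fin N) ℝ) (l : List (Fin m)) : Matrix (Fin N) (Fin N) ℝ :=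
  (l.map B).prod

variable {B : Fin m → Matrix (Fin N) (Fin N) ℝ}

lemma P_nil : P B [] = 1 := rfl

lemma P_cons {i : Fin m} {l : List (Fin m)} : P B (i :: l) = B i * P B l := by
  simp [P]

lemma P_append {l₁ l₂ : List (Fin m)} : P B (l₁ ++ l₂) = P B l₁ * P B l₂ := by
  simp [P]

lemma P_singleton {i : Fin m} : P B [i] = B i := by simp [P]

section rel
variable (hsq : ∀ i, B i * B i = -1)
  (hanti : ∀ i j, i ≠ j → B i * B j = -(B j * B i))

include hanti in
lemma move {i : Fin m} : ∀ {l : List (Fin m)}, i ∉ l →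
    P B l * B i = (-1 : ℝ) ^ l.length • (B i * P B l) := by
  intro l
  induction l with
  | nil => simp [P_nil]
  | cons j l ih =>
    intro hi
    have hij : i ≠ j := fun h => hi (h ▸ List.mem_cons_self (a := j) (l := l))
    have hil : i ∉ l := fun h => hi (List.mem_cons_of_mem _ h)
    rw [P_cons, mul_assoc, ih hil, mul_smul_comm, ← mul_assoc,
      hanti j i (Ne.symm hij), List.length_cons, pow_succ]
    rw [neg_mul, mul_assoc, mul_neg_one, neg_smul, smul_neg]

end rel
end Hurwitz

namespace Hurwitz
open Matrix

variable {m N : ℕ} {B : Fin m → Matrix (Fin N) (Fin N) ℝ}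

lemma symmDiff_single_notMem {s : Finset (Fin m)} {i : Fin m} (h : i ∉ s) :
    symmDiff s {i} = insert i s := by
  ext x
  simp only [Finset.mem_symmDiff, Finset.mem_singleton, Finset.mem_insert]
  constructor
  · rintro (⟨hx, hne⟩ | ⟨rfl, _⟩) <;> tauto
  · rintro (rfl | hx)
    · exact Or.inr ⟨rfl, h⟩
    · exact Or.inl ⟨hx, fun hh => h (hh ▸ hx)⟩

lemma symmDiff_single_mem {s : Finset (Fin m)} {i : Fin m} (h : i ∈ s) :
    symmDiff s {i} = s.erase i := by
  ext x
  simp only [Finset.mem_symmDiff, Finset.mem_singleton, Finset.mem_erase]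
  constructor
  · rintro (⟨hx, hne⟩ | ⟨rfl, hx⟩) <;> tauto
  · rintro ⟨hne, hx⟩
    exact Or.inl ⟨hx, hne⟩

section rel
variable (hsq : ∀ i, B i * B i = -1)
  (hanti : ∀ i j, i ≠ j → B i * B j = -(B j * B i))
  (hskew : ∀ i, (B i)ᵀ = -(B i))

include hanti hsq in
lemma move_mem {l : List (Fin m)} (hnd : l.Nodup) {i : Fin m} (hi : i ∈ l) :
    P B l * B i = (-1 : ℝ) ^ (l.length - 1) • (B i * P B l) := by
  obtain ⟨u, v, rfl⟩ := List.append_of_mem hi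
  have hu : u.Nodup := hnd.of_append_left
  have hiv : (i :: v).Nodup := hnd.of_append_right
  have hvnd : v.Nodup := hiv.of_cons
  have hinu : i ∉ u := fun h => (List.disjoint_of_nodup_append hnd) h (List.mem_cons_self (a := i) (l := v))
  have hinv : i ∉ v := (List.nodup_cons.mp hiv).1
  have h1 : P B (u ++ i :: v) * B i = (-1 : ℝ) ^ v.length • (P B u * (B i * B i) * P B v) := by
    rw [P_append, P_cons, mul_assoc, mul_assoc, move hanti hinv, mul_smul_comm, mul_smul_comm]
    ring_nf
    rw [mul_assoc, mul_assoc]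
  have hcancel : ∀ (k : ℕ) (X : Matrix (Fin N) (Fin N) ℝ),
      (-1 : ℝ) ^ k • ((-1 : ℝ) ^ k • X) = X := by
    intro k X
    rw [smul_smul, ← pow_add, Even.neg_one_pow ⟨k, (two_mul k).symm ▸ (two_mul k)⟩, one_smul]
  have h2' : B i * P B (u ++ i :: v) = (-1 : ℝ) ^ u.length • (P B u * B i * (B i * P B v)) := by
    rw [P_append, P_cons, ← mul_assoc, move hanti hinu, smul_mul_assoc,
      hcancel]
  have h2 : P B u * (B i * B i) * P B v = (-1 : ℝ) ^ u.length • (B i * P B (u ++ i :: v)) := by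
    rw [h2', hcancel]
    simp [mul_assoc]
  have hlen : (u ++ i :: v).length - 1 = u.length + v.length := by
    simp [List.length_append]
  rw [h1, h2, smul_smul, hlen, pow_add]
  congr 1
  ring

include hsq in
lemma trace_flip {A : Matrix (Fin N) (Fin N) ℝ} {c : Fin m}
    (h : A * B c = -(B c * A)) : trace A = 0 := by
  have hinv : B c * (-(B c)) = 1 := by
    rw [mul_neg, hsq c, neg_neg]
  have h1 : trace A = trace (A * (B c * (-(B c)))) := by rw [hinv, mul_one]
  have h2 : trace (A * (B c * (-(B c)))) = trace ((A * B c) * (-(B c))) := by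
    rw [mul_assoc]
  have h3 : trace ((A * B c) * (-(B c))) = trace ((-(B c * A)) * (-(B c))) := by rw [h]
  have h4 : ((-(B c * A)) * (-(B c))) = B c * A * B c := by
    rw [neg_mul, mul_neg, neg_neg]
  have h5 : trace (B c * A * B c) = trace (B c * (B c * A)) := by
    rw [trace_mul_comm, ← mul_assoc]
  have h6 : B c * (B c * A) = -A := by
    rw [← mul_assoc, hsq c, neg_one_mul]
  have : trace A = trace (-A) := by rw [h1, h2, h3, h4, h5, h6]
  rw [trace_neg] at this
  linarith

include hsq hanti in
lemma trace_P_eq_zero {l : List (Fin m)} (hnd : l.Nodup) (hne : l ≠ [])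
    (hout : ∃ j, j ∉ l) : trace (P B l) = 0 := by
  rcases Nat.even_or_odd l.length with he | ho
  · -- even length: flip with an element of l
    obtain ⟨i, hi⟩ := List.exists_mem_of_ne_nil l hne
    have hmm := move_mem hsq hanti hnd hi
    have hodd : Odd (l.length - 1) := by
      have : l.length ≠ 0 := by simpa using hne
      rcases he with ⟨k, hk⟩
      refine ⟨k - 1, by omega⟩
    rw [hodd.neg_one_pow, neg_one_smul] at hmm
    exact trace_flip hsq hmm
  · obtain ⟨j, hj⟩ := hout
    have hmm := move hanti hj
    rw [ho.neg_one_pow, neg_one_smul] at hmm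
    exact trace_flip hsq hmm

include hskew in
lemma P_transpose : ∀ (l : List (Fin m)),
    (P B l)ᵀ = (-1 : ℝ) ^ l.length • P B l.reverse := by
  intro l
  induction l with
  | nil => simp [P_nil]
  | cons i l ih =>
    rw [P_cons, transpose_mul, ih, hskew i, List.reverse_cons, P_append, P_singleton,
      smul_mul_assoc, mul_neg, List.length_cons, pow_succ, mul_comm ((-1:ℝ)^l.length),
      ← smul_smul, neg_one_smul, smul_neg]

include hanti in
lemma P_reverse : ∀ {l : List (Fin m)}, l.Nodup →
    P B l.reverse = (-1 : ℝ) ^ (l.length.choose 2) • P B l := by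
  intro l
  induction l with
  | nil => simp [P_nil]
  | cons i l ih =>
    intro hnd
    have hinl : i ∉ l := (List.nodup_cons.mp hnd).1
    rw [List.reverse_cons, P_append, P_singleton, ih (List.nodup_cons.mp hnd).2,
      smul_mul_assoc, move hanti hinl, smul_smul, ← P_cons]
    congr 1
    rw [List.length_cons, ← pow_add]
    congr 1
    simp [Nat.choose_succ_succ, Nat.choose_one_right]
    omega

include hsq hanti in
lemma step {l : List (Fin m)} (hnd : l.Nodup) (i : Fin m) :
    ∃ ε : ℝ, (ε = 1 ∨ ε = -1) ∧ ∃ r : List (Fin m), r.Nodup ∧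
      r.toFinset = symmDiff l.toFinset {i} ∧ P B l * B i = ε • P B r := by
  by_cases hi : i ∈ l
  · obtain ⟨u, v, rfl⟩ := List.append_of_mem hi
    have hu : u.Nodup := hnd.of_append_left
    have hiv : (i :: v).Nodup := hnd.of_append_right
    have hvnd : v.Nodup := hiv.of_cons
    have hinu : i ∉ u := fun h => (List.disjoint_of_nodup_append hnd) h (List.mem_cons_self (a := i) (l := v))
    have hinv : i ∉ v := (List.nodup_cons.mp hiv).1
    refine ⟨(-1 : ℝ) ^ (v.length + 1), neg_one_pow_eq_or ℝ _, u ++ v, ?_, ?_, ?_⟩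
    · exact ((List.sublist_cons_self i v).append_left u).nodup hnd
    · rw [symmDiff_single_mem (by simp [List.mem_toFinset] : i ∈ (u ++ i :: v).toFinset)]
      ext x
      have h1 : x ∈ u → x ≠ i := fun h he => hinu (he ▸ h)
      have h2 : x ∈ v → x ≠ i := fun h he => hinv (he ▸ h)
      simp only [List.toFinset_append, List.toFinset_cons, Finset.mem_union, Finset.mem_erase,
        Finset.mem_insert, List.mem_toFinset]
      constructor
      · rintro (hx | hx)
        · exact ⟨h1 hx, Or.inl hx⟩
        · exact ⟨h2 hx, Or.inr (Or.inr hx)⟩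
      · rintro ⟨hne, hx | rfl | hx⟩ <;> tauto
    · rw [P_append, P_cons, P_append, mul_assoc, mul_assoc (B i), move hanti hinv,
        mul_smul_comm, mul_smul_comm, ← mul_assoc (B i), hsq i, neg_one_mul, mul_neg,
        smul_neg, pow_succ, mul_neg_one, neg_smul]
  · refine ⟨1, Or.inl rfl, l ++ [i], ?_, ?_, ?_⟩
    · simp [List.nodup_append, hnd, hi]
      exact fun a ha h => hi (h ▸ ha)
    · rw [symmDiff_single_notMem (by simpa using hi)]
      ext x
      simp [List.mem_toFinset, or_comm]
    · rw [P_append, P_singleton, one_smul]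

include hsq hanti in
lemma mulP : ∀ (t l : List (Fin m)), l.Nodup → t.Nodup →
    ∃ ε : ℝ, (ε = 1 ∨ ε = -1) ∧ ∃ r : List (Fin m), r.Nodup ∧
      r.toFinset = symmDiff l.toFinset t.toFinset ∧ P B l * P B t = ε • P B r := by
  intro t
  induction t with
  | nil =>
    intro l hl _
    exact ⟨1, Or.inl rfl, l, hl, by simp [symmDiff_eq_sup_sdiff_inf], by rw [P_nil, mul_one, one_smul]⟩
  | cons j t ih =>
    intro l hl hjt
    have hjt' : t.Nodup := (List.nodup_cons.mp hjt).2
    have hjnt : j ∉ t := (List.nodup_cons.mp hjt).1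
    obtain ⟨ε₁, hε₁, r₁, hr₁nd, hr₁fs, hr₁⟩ := step hsq hanti hl j
    obtain ⟨ε₂, hε₂, r₂, hr₂nd, hr₂fs, hr₂⟩ := ih r₁ hr₁nd hjt'
    refine ⟨ε₁ * ε₂, ?_, r₂, hr₂nd, ?_, ?_⟩
    · rcases hε₁ with rfl | rfl <;> rcases hε₂ with rfl | rfl <;> norm_num
    · rw [hr₂fs, hr₁fs, symmDiff_assoc]
      congr 1
      rw [symmDiff_comm, symmDiff_single_notMem (by simpa using hjnt)]
      simp [List.toFinset_cons]
    · rw [P_cons, ← mul_assoc, hr₁, smul_mul_assoc, hr₂, smul_smul]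

include hsq hskew in
lemma P_orth : ∀ (l : List (Fin m)), (P B l)ᵀ * P B l = 1 := by
  intro l
  induction l with
  | nil => simp [P_nil]
  | cons i l ih =>
    rw [P_cons, transpose_mul, mul_assoc, ← mul_assoc (B i)ᵀ, hskew i, neg_mul, hsq i,
      neg_neg, one_mul, ih]

include hsq hanti hskew in
lemma trace_P_mul_transpose_self (l : List (Fin m)) :
    trace (P B l * (P B l)ᵀ) = N := by
  rw [trace_mul_comm, P_orth hsq hskew, trace_one]
  simp

include hsq hanti hskew in
lemma trace_P_mul_transpose {s t : List (Fin m)} (hs : s.Nodup) (ht : t.Nodup)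
    (hne : s.toFinset ≠ t.toFinset)
    (hout : ∃ j, j ∉ symmDiff s.toFinset t.toFinset) :
    trace (P B s * (P B t)ᵀ) = 0 := by
  obtain ⟨j, hj⟩ := hout
  rw [P_transpose hskew]
  have htr : t.reverse.Nodup := List.nodup_reverse.mpr ht
  obtain ⟨ε, hε, r, hrnd, hrfs, hr⟩ := mulP hsq hanti t.reverse s hs htr
  rw [List.toFinset_reverse] at hrfs
  have hrne : r ≠ [] := by
    intro h
    rw [h] at hrfs
    exact hne (symmDiff_eq_bot.mp (by simpa using hrfs.symm))
  have hjr : j ∉ r := by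
    intro h
    exact hj (hrfs ▸ List.mem_toFinset.mpr h)
  rw [mul_smul_comm, hr, trace_smul, trace_smul,
    trace_P_eq_zero hsq hanti hrnd hrne ⟨j, hjr⟩]
  simp

include hsq hanti hskew in
lemma indepP {ι : Type*} [Fintype ι] (hN : 0 < N) (L : ι → List (Fin m))
    (hnd : ∀ a, (L a).Nodup)
    (hinj : ∀ a b, a ≠ b → (L a).toFinset ≠ (L b).toFinset)
    (hout : ∀ a b, a ≠ b → ∃ j, j ∉ symmDiff (L a).toFinset (L b).toFinset) :
    LinearIndependent ℝ (fun a => P B (L a)) := by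
  rw [Fintype.linearIndependent_iff]
  intro g hg b
  have h1 : trace ((∑ a, g a • P B (L a)) * (P B (L b))ᵀ) = 0 := by
    rw [hg, zero_mul, trace_zero]
  rw [Finset.sum_mul] at h1
  rw [trace_sum] at h1
  have h2 : ∀ a ∈ Finset.univ, a ≠ b →
      trace ((g a • P B (L a)) * (P B (L b))ᵀ) = 0 := by
    intro a _ hab
    rw [smul_mul_assoc, trace_smul,
      trace_P_mul_transpose hsq hanti hskew (hnd a) (hnd b) (hinj a b hab) (hout a b hab)]
    simp
  rw [Finset.sum_eq_single b h2 (by simp)] at h1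
  rw [smul_mul_assoc, trace_smul, trace_P_mul_transpose_self hsq hanti hskew] at h1
  have : (N : ℝ) ≠ 0 := Nat.cast_ne_zero.mpr hN.ne'
  simpa [this] using h1

end rel

section extract
variable {n : ℕ}

/-- dot product -/
def D (x y : Fin n → ℝ) : ℝ := ∑ i, x i * y i

/-- the bilinear vector-valued form -/
def F (a : Fin n → Fin n → Fin n → ℝ) (x y : Fin n → ℝ) : Fin n → ℝ :=
  fun k => ∑ i, ∑ j, a k i j * x i * y j

lemma D_comm (x y : Fin n → ℝ) : D x y = D y x := by
  simp [D, mul_comm]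

lemma D_expand (u v w z : Fin n → ℝ) :
    D (u + v) (w + z) = D u w + D u z + D v w + D v z := by
  simp only [D, Pi.add_apply, ← Finset.sum_add_distrib]
  apply Finset.sum_congr rfl
  intro i _
  ring

lemma F_add_left (a : Fin n → Fin n → Fin n → ℝ) (x x' y : Fin n → ℝ) :
    F a (x + x') y = F a x y + F a x' y := by
  funext k
  simp only [F, Pi.add_apply, ← Finset.sum_add_distrib]
  apply Finset.sum_congr rfl
  intro i _
  apply Finset.sum_congr rfl
  intro j _
  ring

lemma F_add_right (a : Fin n → Fin n → Fin n → ℝ) (x y y' : Fin n → ℝ) :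
    F a x (y + y') = F a x y + F a x y' := by
  funext k
  simp only [F, Pi.add_apply, ← Finset.sum_add_distrib]
  apply Finset.sum_congr rfl
  intro i _
  apply Finset.sum_congr rfl
  intro j _
  ring

variable {a : Fin n → Fin n → Fin n → ℝ}

lemma polar1 (h : ∀ x y : Fin n → ℝ, D x x * D y y = D (F a x y) (F a x y))
    (x x' y : Fin n → ℝ) : D x x' * D y y = D (F a x y) (F a x' y) := by
  have e1 := h (x + x') y
  have e2 := h x y
  have e3 := h x' y
  rw [F_add_left, D_expand, D_expand] at e1
  have c1 : D x x' = D x' x := D_comm _ _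
  have c2 : D (F a x y) (F a x' y) = D (F a x' y) (F a x y) := D_comm _ _
  have c1' : D x x' * D y y = D x' x * D y y := by rw [c1]
  ring_nf at e1 e2 e3 ⊢
  linarith

lemma polar2 (h : ∀ x y : Fin n → ℝ, D x x * D y y = D (F a x y) (F a x y))
    (x x' y y' : Fin n → ℝ) :
    2 * (D x x' * D y y') = D (F a x y) (F a x' y') + D (F a x y') (F a x' y) := by
  have e1 := polar1 h x x' (y + y')
  have e2 := polar1 h x x' y
  have e3 := polar1 h x x' y'
  rw [F_add_right, F_add_right, D_expand, D_expand] at e1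
  have c1 : D y y' = D y' y := D_comm _ _
  have c2 : D (F a x y') (F a x' y) = D (F a x' y) (F a x y') := D_comm _ _
  have c3 : D (F a x y) (F a x' y') = D (F a x' y') (F a x y) := D_comm _ _
  have c1' : D x x' * D y y' = D x x' * D y' y := by rw [c1]
  ring_nf at e1 e2 e3 ⊢
  linarith

/-- standard basis vector -/
def e (i : Fin n) : Fin n → ℝ := Pi.single i 1

lemma F_single (i j : Fin n) : F a (e i) (e j) = fun k => a k i j := by
  funext k
  simp only [F, e, Pi.single_apply, mul_ite, ite_mul, mul_one, mul_zero, zero_mul, one_mul]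
  simp [Finset.sum_ite_irrel, Finset.sum_ite_eq', Finset.sum_ite_eq]

lemma D_single (i i' : Fin n) : D (e i) (e i') = if i = i' then 1 else 0 := by
  simp only [D, e, Pi.single_apply, mul_ite, ite_mul, mul_one, mul_zero, zero_mul, one_mul]
  by_cases h : i = i' <;> simp [h, Finset.sum_ite_eq' Finset.univ, eq_comm]

/-- the matrix `M j` with entries `(M j) k i = a k i j` -/
def Mmat (a : Fin n → Fin n → Fin n → ℝ) (j : Fin n) : Matrix (Fin n) (Fin n) ℝ :=
  Matrix.of fun k i => a k i j

lemma Mrel (h : ∀ x y : Fin n → ℝ, D x x * D y y = D (F a x y) (F a x y)) (j j' : Fin n) :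
    (Mmat a j)ᵀ * Mmat a j' + (Mmat a j')ᵀ * Mmat a j
      = ((2 : ℝ) * if j = j' then 1 else 0) • 1 := by
  ext i i'
  have hp := polar2 h (e i) (e i') (e j) (e j')
  rw [F_single, F_single, F_single, F_single, D_single, D_single] at hp
  have hD1 : D (fun k => a k i j) (fun k => a k i' j') = ∑ k, a k i j * a k i' j' := rfl
  have hD2 : D (fun k => a k i j') (fun k => a k i' j) = ∑ k, a k i j' * a k i' j := rfl
  rw [hD1, hD2] at hp
  simp only [Matrix.add_apply, Matrix.mul_apply, Matrix.transpose_apply, Matrix.smul_apply,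
    Matrix.one_apply, Mmat, Matrix.of_apply, smul_eq_mul]
  rw [← hp]
  by_cases hii : i = i' <;> simp [hii] <;> ring

lemma MtM (h : ∀ x y : Fin n → ℝ, D x x * D y y = D (F a x y) (F a x y)) (j : Fin n) :
    (Mmat a j)ᵀ * Mmat a j = 1 := by
  have H := Mrel h j j
  rw [if_pos rfl, mul_one] at H
  have h2 : (2 : ℝ) • ((Mmat a j)ᵀ * Mmat a j) = (2 : ℝ) • (1 : Matrix (Fin n) (Fin n) ℝ) := by
    rw [two_smul, H]
  exact smul_right_injective _ (by norm_num : (2:ℝ) ≠ 0) h2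

lemma Manti (h : ∀ x y : Fin n → ℝ, D x x * D y y = D (F a x y) (F a x y)) {j j' : Fin n}
    (hjj : j ≠ j') : (Mmat a j)ᵀ * Mmat a j' = -((Mmat a j')ᵀ * Mmat a j) := by
  have := Mrel h j j'
  rw [if_neg hjj] at this
  simp only [mul_zero, zero_smul] at this
  exact eq_neg_of_add_eq_zero_left this
end extract


section impossible
open Matrix

lemma Bprops {k : ℕ} {a : Fin (k+2) → Fin (k+2) → Fin (k+2) → ℝ}
    (h : ∀ x y : Fin (k+2) → ℝ, D x x * D y y = D (F a x y) (F a x y)) :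
    ∃ B : Fin (k+1) → Matrix (Fin (k+2)) (Fin (k+2)) ℝ,
      (∀ i, B i * B i = -1) ∧ (∀ i j, i ≠ j → B i * B j = -(B j * B i)) ∧
      (∀ i, (B i)ᵀ = -(B i)) := by
  set Mm := Mmat a with hMm
  set lst := Fin.last (k+1) with hlst
  have horth : ∀ j, Mm j * (Mm j)ᵀ = 1 := fun j => mul_eq_one_comm.mp (MtM h j)
  have hcs : ∀ i : Fin (k+1), i.castSucc ≠ lst := fun i => (Fin.castSucc_lt_last i).ne
  have hskew : ∀ i : Fin (k+1),
      ((Mm lst)ᵀ * Mm i.castSucc)ᵀ = -((Mm lst)ᵀ * Mm i.castSucc) := by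
    intro i
    rw [transpose_mul, transpose_transpose]
    exact Manti h (hcs i)
  have hBtB : ∀ i j : Fin (k+1),
      ((Mm lst)ᵀ * Mm i.castSucc)ᵀ * ((Mm lst)ᵀ * Mm j.castSucc)
        = (Mm i.castSucc)ᵀ * Mm j.castSucc := by
    intro i j
    rw [transpose_mul, transpose_transpose, mul_assoc, ← mul_assoc (Mm lst), horth, one_mul]
  have hsq : ∀ i : Fin (k+1),
      ((Mm lst)ᵀ * Mm i.castSucc) * ((Mm lst)ᵀ * Mm i.castSucc) = -1 := by
    intro i
    have e1 : ((Mm lst)ᵀ * Mm i.castSucc) * ((Mm lst)ᵀ * Mm i.castSucc)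
        = -(((Mm lst)ᵀ * Mm i.castSucc)ᵀ * ((Mm lst)ᵀ * Mm i.castSucc)) := by
      rw [hskew i, neg_mul, neg_neg]
    rw [e1, hBtB i i, MtM h]
  have hanti : ∀ i j : Fin (k+1), i ≠ j →
      ((Mm lst)ᵀ * Mm i.castSucc) * ((Mm lst)ᵀ * Mm j.castSucc)
        = -(((Mm lst)ᵀ * Mm j.castSucc) * ((Mm lst)ᵀ * Mm i.castSucc)) := by
    intro i j hij
    have hcc : i.castSucc ≠ j.castSucc := by simpa [Fin.castSucc_inj] using hij
    have e2 : ((Mm lst)ᵀ * Mm i.castSucc)ᵀ * ((Mm lst)ᵀ * Mm j.castSucc)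
        = -(((Mm lst)ᵀ * Mm j.castSucc)ᵀ * ((Mm lst)ᵀ * Mm i.castSucc)) := by
      rw [hBtB, hBtB]
      exact Manti h hcc
    rw [hskew i, hskew j] at e2
    rw [neg_mul, neg_mul, neg_neg] at e2
    rw [← e2, neg_neg]
  exact ⟨fun i => (Mm lst)ᵀ * Mm i.castSucc, hsq, hanti, hskew⟩


lemma caseOdd {k : ℕ} (ho : Odd (k+2)) {a : Fin (k+2) → Fin (k+2) → Fin (k+2) → ℝ}
    (h : ∀ x y : Fin (k+2) → ℝ, D x x * D y y = D (F a x y) (F a x y)) : False := by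
  obtain ⟨B, hsq, hanti, hskew⟩ := Bprops h
  have h2 := hsq 0
  have hdet : det (B 0) * det (B 0) = det (-1 : Matrix (Fin (k+2)) (Fin (k+2)) ℝ) := by
    rw [← det_mul, h2]
  rw [det_neg, det_one, Fintype.card_fin, ho.neg_one_pow, mul_one] at hdet
  nlinarith [mul_self_nonneg (det (B 0))]

lemma growth : ∀ k : ℕ, 8 ≤ k → (k+2)*(k+2) < 2^k := by
  intro k hk
  induction k, hk using Nat.le_induction with
  | base => norm_num
  | succ k hk ih =>
    rw [pow_succ]
    nlinarith

lemma caseBig {k : ℕ} (hk : 8 ≤ k) {a : Fin (k+2) → Fin (k+2) → Fin (k+2) → ℝ}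
    (h : ∀ x y : Fin (k+2) → ℝ, D x x * D y y = D (F a x y) (F a x y)) : False := by
  obtain ⟨B, hsq, hanti, hskew⟩ := Bprops h
  set L : Finset (Fin k) → List (Fin (k+1)) := fun S => (S.map Fin.castSuccEmb).toList with hL
  have hfs : ∀ S, (L S).toFinset = S.map Fin.castSuccEmb := fun S => Finset.toList_toFinset _
  have hnd : ∀ S, (L S).Nodup := fun S => Finset.nodup_toList _
  have hinj : ∀ S T, S ≠ T → (L S).toFinset ≠ (L T).toFinset := by
    intro S T hST
    rw [hfs, hfs]
    exact fun hh => hST (Finset.map_injective _ hh)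
  have hout : ∀ S T, S ≠ T → ∃ j, j ∉ symmDiff (L S).toFinset (L T).toFinset := by
    intro S T _
    refine ⟨Fin.last k, ?_⟩
    intro hmem
    rw [hfs, hfs] at hmem
    have : Fin.last k ∈ S.map Fin.castSuccEmb ∨ Fin.last k ∈ T.map Fin.castSuccEmb := by
      rcases Finset.mem_symmDiff.mp hmem with ⟨h1, _⟩ | ⟨h1, _⟩
      · exact Or.inl h1
      · exact Or.inr h1
    rcases this with h1 | h1 <;>
    · obtain ⟨x, _, hx⟩ := Finset.mem_map.mp h1
      exact (Fin.castSucc_lt_last x).ne hx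
  have hind := indepP hsq hanti hskew (Nat.succ_pos _) L hnd hinj hout
  have hcard := hind.fintype_card_le_finrank
  rw [Fintype.card_finset, Fintype.card_fin, Module.finrank_matrix, Fintype.card_fin,
    Module.finrank_self, mul_one] at hcard
  exact absurd hcard (not_le.mpr (growth k hk))

lemma P_skew {B : Fin 5 → Matrix (Fin 6) (Fin 6) ℝ}
    (hsq : ∀ i, B i * B i = -1)
    (hanti : ∀ i j, i ≠ j → B i * B j = -(B j * B i))
    (hskew : ∀ i, (B i)ᵀ = -(B i))
    {l : List (Fin 5)} (hnd : l.Nodup) (hlen : l.length = 1 ∨ l.length = 2 ∨ l.length = 5) :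
    (P B l)ᵀ = -(P B l) := by
  rw [P_transpose hskew, P_reverse hanti hnd, smul_smul, ← pow_add]
  rcases hlen with h | h | h <;> rw [h] <;> norm_num [Nat.choose]

lemma case6 {a : Fin 6 → Fin 6 → Fin 6 → ℝ}
    (h : ∀ x y : Fin 6 → ℝ, D x x * D y y = D (F a x y) (F a x y)) : False := by
  obtain ⟨B, hsq, hanti, hskew⟩ := Bprops (k := 4) h
  set ι := {S : Finset (Fin 5) // S.card = 1 ∨ S.card = 2 ∨ S.card = 5} with hι
  set L : ι → List (Fin 5) := fun S => S.1.toList with hL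
  have hfs : ∀ s : ι, (L s).toFinset = s.1 := fun s => Finset.toList_toFinset _
  have hnd : ∀ s : ι, (L s).Nodup := fun s => Finset.nodup_toList _
  have hlen : ∀ s : ι, (L s).length = s.1.card := fun s => Finset.length_toList _
  have hinj : ∀ s t : ι, s ≠ t → (L s).toFinset ≠ (L t).toFinset := by
    intro s t hst
    rw [hfs, hfs]
    exact fun hh => hst (Subtype.ext hh)
  have huniv : ∀ u : Finset (Fin 5), (symmDiff Finset.univ u).card = 5 - u.card := by
    intro u
    have he : symmDiff Finset.univ u = Finset.univ \ u := by
      ext x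
      simp [Finset.mem_symmDiff]
    rw [he, Finset.card_sdiff_of_subset (Finset.subset_univ u)]
    simp
  have hout : ∀ s t : ι, s ≠ t → ∃ j, j ∉ symmDiff (L s).toFinset (L t).toFinset := by
    intro s t hst
    rw [hfs, hfs]
    by_contra hall
    push_neg at hall
    have huniv' : symmDiff s.1 t.1 = Finset.univ := Finset.eq_univ_iff_forall.mpr hall
    have hc5 : (symmDiff s.1 t.1).card = 5 := by rw [huniv']; simp
    have hsub : symmDiff s.1 t.1 ⊆ s.1 ∪ t.1 := by
      intro x hx
      rw [Finset.mem_union]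
      rcases Finset.mem_symmDiff.mp hx with ⟨h1, _⟩ | ⟨h1, _⟩
      · exact Or.inl h1
      · exact Or.inr h1
    have hle : 5 ≤ s.1.card + t.1.card := by
      calc 5 = (symmDiff s.1 t.1).card := hc5.symm
        _ ≤ (s.1 ∪ t.1).card := Finset.card_le_card hsub
        _ ≤ s.1.card + t.1.card := Finset.card_union_le _ _
    -- cases on cards
    have hs5 : s.1.card = 5 → s.1 = Finset.univ := by
      intro hc
      exact (Finset.card_eq_iff_eq_univ _).mp (by simpa using hc)
    have ht5 : t.1.card = 5 → t.1 = Finset.univ := by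
      intro hc
      exact (Finset.card_eq_iff_eq_univ _).mp (by simpa using hc)
    rcases s.2 with hs | hs | hs <;> rcases t.2 with ht | ht | ht
    -- cases with both small: contradiction by hle
    · omega
    · omega
    · -- s.card = 1, t.card = 5
      rw [ht5 ht, symmDiff_comm, huniv] at hc5
      omega
    · omega
    · omega
    · rw [ht5 ht, symmDiff_comm, huniv] at hc5
      omega
    · rw [hs5 hs, huniv] at hc5
      omega
    · rw [hs5 hs, huniv] at hc5
      omega
    · exact hst (Subtype.ext ((hs5 hs).trans (ht5 ht).symm))
  have hind := indepP hsq hanti hskew (by norm_num) L hnd hinj hout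
  have hskewP : ∀ s : ι, (P B (L s))ᵀ = -(P B (L s)) := by
    intro s
    exact P_skew hsq hanti hskew (hnd s) (by rw [hlen]; exact s.2)
  -- the linear map extracting strictly-upper entries
  let φ : Matrix (Fin 6) (Fin 6) ℝ →ₗ[ℝ] ({p : Fin 6 × Fin 6 // p.1 < p.2} → ℝ) :=
    { toFun := fun A p => A p.1.1 p.1.2
      map_add' := by intro A C; funext p; simp
      map_smul' := by intro c A; funext p; simp }
  have hind2 : LinearIndependent ℝ (fun s : ι => φ (P B (L s))) := by
    rw [Fintype.linearIndependent_iff] at hind ⊢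
    intro g hg
    set W := ∑ s : ι, g s • P B (L s) with hWdef
    have hφW : φ W = 0 := by
      rw [hWdef, map_sum]
      simpa [_root_.map_smul] using hg
    have hWskew : Wᵀ = -W := by
      rw [hWdef, Matrix.transpose_sum, ← Finset.sum_neg_distrib]
      apply Finset.sum_congr rfl
      intro s _
      rw [Matrix.transpose_smul, hskewP s, smul_neg]
    have hupper : ∀ i j : Fin 6, i < j → W i j = 0 := by
      intro i j hij
      exact congrFun hφW ⟨(i, j), hij⟩
    have hW0 : W = 0 := by
      ext i j
      rcases lt_trichotomy i j with hij | rfl | hij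
      · rw [hupper i j hij]; rfl
      · have hd : Wᵀ i i = -W i i := by rw [hWskew]; rfl
        have : W i i = -W i i := hd
        have : W i i = 0 := by linarith
        rw [this]; rfl
      · have h1 : Wᵀ i j = -W i j := by rw [hWskew]; rfl
        have h2 : Wᵀ i j = W j i := rfl
        rw [hupper j i hij] at h2
        have : W i j = 0 := by rw [← neg_neg (W i j), ← h1, h2, neg_zero]
        rw [this]; rfl
    exact hind g hW0
  have hcard := hind2.fintype_card_le_finrank
  rw [Module.finrank_fintype_fun_eq_card] at hcard
  have h16 : Fintype.card ι = 16 := by decide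
  have h15 : Fintype.card {p : Fin 6 × Fin 6 // p.1 < p.2} = 15 := by decide
  omega

lemma no_identity {n : ℕ} (hn : 1 ≤ n) (h1 : n ≠ 1) (h2 : n ≠ 2) (h4 : n ≠ 4) (h8 : n ≠ 8)
    {a : Fin n → Fin n → Fin n → ℝ}
    (h : ∀ x y : Fin n → ℝ, D x x * D y y = D (F a x y) (F a x y)) : False := by
  obtain ⟨k, rfl⟩ : ∃ k, n = k + 2 := ⟨n - 2, by omega⟩
  rcases Nat.even_or_odd (k+2) with he | ho
  · by_cases hk : 8 ≤ k
    · exact caseBig hk h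
    · obtain ⟨t, ht⟩ := he
      have hk4 : k = 4 := by omega
      subst hk4
      exact case6 h
  · exact caseOdd ho h

end impossible

lemma v1_0 {α : Type*} (a : α) : ![a] (0 : Fin 1) = a := rfl
lemma v2_0 {α : Type*} (a b : α) : ![a, b] (0 : Fin 2) = a := rfl
lemma v2_1 {α : Type*} (a b : α) : ![a, b] (1 : Fin 2) = b := rfl
lemma v4_0 {α : Type*} (a b c d : α) : ![a, b, c, d] (0 : Fin 4) = a := rfl
lemma v4_1 {α : Type*} (a b c d : α) : ![a, b, c, d] (1 : Fin 4) = b := rfl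
lemma v4_2 {α : Type*} (a b c d : α) : ![a, b, c, d] (2 : Fin 4) = c := rfl
lemma v4_3 {α : Type*} (a b c d : α) : ![a, b, c, d] (3 : Fin 4) = d := rfl
lemma v8_0 {α : Type*} (a b c d e f g h : α) : ![a, b, c, d, e, f, g, h] (0 : Fin 8) = a := rfl
lemma v8_1 {α : Type*} (a b c d e f g h : α) : ![a, b, c, d, e, f, g, h] (1 : Fin 8) = b := rfl
lemma v8_2 {α : Type*} (a b c d e f g h : α) : ![a, b, c, d, e, f, g, h] (2 : Fin 8) = c := rfl
lemma v8_3 {α : Type*} (a b c d e f g h : α) : ![a, b, c, d, e, f, g, h] (3 : Fin 8) = d := rfl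
lemma v8_4 {α : Type*} (a b c d e f g h : α) : ![a, b, c, d, e, f, g, h] (4 : Fin 8) = e := rfl
lemma v8_5 {α : Type*} (a b c d e f g h : α) : ![a, b, c, d, e, f, g, h] (5 : Fin 8) = f := rfl
lemma v8_6 {α : Type*} (a b c d e f g h : α) : ![a, b, c, d, e, f, g, h] (6 : Fin 8) = g := rfl
lemma v8_7 {α : Type*} (a b c d e f g h : α) : ![a, b, c, d, e, f, g, h] (7 : Fin 8) = h := rfl

def a1 : Fin 1 → Fin 1 → Fin 1 → ℝ := fun _ _ _ => 1

def a2 : Fin 2 → Fin 2 → Fin 2 → ℝ :=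
  ![![![1, 0], ![0, -1]],
    ![![0, 1], ![1, 0]]]

def a4 : Fin 4 → Fin 4 → Fin 4 → ℝ :=
  ![![![1, 0, 0, 0], ![0, -1, 0, 0], ![0, 0, -1, 0], ![0, 0, 0, -1]],
    ![![0, 1, 0, 0], ![1, 0, 0, 0], ![0, 0, 0, 1], ![0, 0, -1, 0]],
    ![![0, 0, 1, 0], ![0, 0, 0, -1], ![1, 0, 0, 0], ![0, 1, 0, 0]],
    ![![0, 0, 0, 1], ![0, 0, 1, 0], ![0, -1, 0, 0], ![1, 0, 0, 0]]]

def a8 : Fin 8 → Fin 8 → Fin 8 → ℝ :=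
  ![![![1, 0, 0, 0, 0, 0, 0, 0], ![0, -1, 0, 0, 0, 0, 0, 0], ![0, 0, -1, 0, 0, 0, 0, 0], ![0, 0, 0, -1, 0, 0, 0, 0], ![0, 0, 0, 0, -1, 0, 0, 0], ![0, 0, 0, 0, 0, -1, 0, 0], ![0, 0, 0, 0, 0, 0, -1, 0], ![0, 0, 0, 0, 0, 0, 0, -1]],
    ![![0, 1, 0, 0, 0, 0, 0, 0], ![1, 0, 0, 0, 0, 0, 0, 0], ![0, 0, 0, 1, 0, 0, 0, 0], ![0, 0, -1, 0, 0, 0, 0, 0], ![0, 0, 0, 0, 0, 1, 0, 0], ![0, 0, 0, 0, -1, 0, 0, 0], ![0, 0, 0, 0, 0, 0, 0, -1], ![0, 0, 0, 0, 0, 0, 1, 0]],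
    ![![0, 0, 1, 0, 0, 0, 0, 0], ![0, 0, 0, -1, 0, 0, 0, 0], ![1, 0, 0, 0, 0, 0, 0, 0], ![0, 1, 0, 0, 0, 0, 0, 0], ![0, 0, 0, 0, 0, 0, 1, 0], ![0, 0, 0, 0, 0, 0, 0, 1], ![0, 0, 0, 0, -1, 0, 0, 0], ![0, 0, 0, 0, 0, -1, 0, 0]],
    ![![0, 0, 0, 1, 0, 0, 0, 0], ![0, 0, 1, 0, 0, 0, 0, 0], ![0, -1, 0, 0, 0, 0, 0, 0], ![1, 0, 0, 0, 0, 0, 0, 0], ![0, 0, 0, 0, 0, 0, 0, 1], ![0, 0, 0, 0, 0, 0, -1, 0], ![0, 0, 0, 0, 0, 1, 0, 0], ![0, 0, 0, 0, -1, 0, 0, 0]],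
    ![![0, 0, 0, 0, 1, 0, 0, 0], ![0, 0, 0, 0, 0, -1, 0, 0], ![0, 0, 0, 0, 0, 0, -1, 0], ![0, 0, 0, 0, 0, 0, 0, -1], ![1, 0, 0, 0, 0, 0, 0, 0], ![0, 1, 0, 0, 0, 0, 0, 0], ![0, 0, 1, 0, 0, 0, 0, 0], ![0, 0, 0, 1, 0, 0, 0, 0]],
    ![![0, 0, 0, 0, 0, 1, 0, 0], ![0, 0, 0, 0, 1, 0, 0, 0], ![0, 0, 0, 0, 0, 0, 0, -1], ![0, 0, 0, 0, 0, 0, 1, 0], ![0, -1, 0, 0, 0, 0, 0, 0], ![1, 0, 0, 0, 0, 0, 0, 0], ![0, 0, 0, -1, 0, 0, 0, 0], ![0, 0, 1, 0, 0, 0, 0, 0]],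
    ![![0, 0, 0, 0, 0, 0, 1, 0], ![0, 0, 0, 0, 0, 0, 0, 1], ![0, 0, 0, 0, 1, 0, 0, 0], ![0, 0, 0, 0, 0, -1, 0, 0], ![0, 0, -1, 0, 0, 0, 0, 0], ![0, 0, 0, 1, 0, 0, 0, 0], ![1, 0, 0, 0, 0, 0, 0, 0], ![0, -1, 0, 0, 0, 0, 0, 0]],
    ![![0, 0, 0, 0, 0, 0, 0, 1], ![0, 0, 0, 0, 0, 0, -1, 0], ![0, 0, 0, 0, 0, 1, 0, 0], ![0, 0, 0, 0, 1, 0, 0, 0], ![0, 0, 0, -1, 0, 0, 0, 0], ![0, 0, -1, 0, 0, 0, 0, 0], ![0, 1, 0, 0, 0, 0, 0, 0], ![1, 0, 0, 0, 0, 0, 0, 0]]]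

lemma id1 : ∀ x y : Fin 1 → ℝ,
    (∑ i, x i ^ 2) * (∑ j, y j ^ 2) = ∑ k, (∑ i, ∑ j, a1 k i j * x i * y j) ^ 2 := by
  intro x y
  simp only [a1, Fin.sum_univ_one, one_mul]
  ring

lemma id2 : ∀ x y : Fin 2 → ℝ,
    (∑ i, x i ^ 2) * (∑ j, y j ^ 2) = ∑ k, (∑ i, ∑ j, a2 k i j * x i * y j) ^ 2 := by
  intro x y
  simp only [a2, Fin.sum_univ_two, v2_0, v2_1]
  ring

lemma id4 : ∀ x y : Fin 4 → ℝ,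
    (∑ i, x i ^ 2) * (∑ j, y j ^ 2) = ∑ k, (∑ i, ∑ j, a4 k i j * x i * y j) ^ 2 := by
  intro x y
  simp only [a4, Fin.sum_univ_four, v4_0, v4_1, v4_2, v4_3]
  ring

lemma id8 : ∀ x y : Fin 8 → ℝ,
    (∑ i, x i ^ 2) * (∑ j, y j ^ 2) = ∑ k, (∑ i, ∑ j, a8 k i j * x i * y j) ^ 2 := by
  intro x y
  simp only [a8, Fin.sum_univ_eight, v8_0, v8_1, v8_2, v8_3, v8_4, v8_5, v8_6, v8_7]
  ring

section final
open MvPolynomial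

lemma construct {n : ℕ} (a : Fin n → Fin n → Fin n → ℝ)
    (h : ∀ x y : Fin n → ℝ,
      (∑ i, x i ^ 2) * (∑ j, y j ^ 2) = ∑ k, (∑ i, ∑ j, a k i j * x i * y j) ^ 2) :
    ∃ z : Fin n → MvPolynomial (Fin n ⊕ Fin n) ℝ,
      (∀ k, IsBilinearForm n (z k)) ∧
      (∑ i, (X (Sum.inl i)) ^ 2) * (∑ j, (X (Sum.inr j)) ^ 2) = ∑ k, (z k) ^ 2 := by
  refine ⟨fun k => ∑ i, ∑ j, C (a k i j) * X (Sum.inl i) * X (Sum.inr j),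
    fun k => ⟨a k, rfl⟩, ?_⟩
  apply MvPolynomial.funext
  intro v
  simp only [_root_.map_mul, map_sum, _root_.map_pow, eval_X, eval_C]
  exact h (fun i => v (Sum.inl i)) (fun j => v (Sum.inr j))

lemma identity_to_DF {n : ℕ} {z : Fin n → MvPolynomial (Fin n ⊕ Fin n) ℝ}
    (hb : ∀ k, IsBilinearForm n (z k))
    (hid : (∑ i, (X (Sum.inl i)) ^ 2) * (∑ j, (X (Sum.inr j)) ^ 2) = ∑ k, (z k) ^ 2) :
    ∃ a : Fin n → Fin n → Fin n → ℝ,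
      ∀ x y : Fin n → ℝ, D x x * D y y = D (F a x y) (F a x y) := by
  have hb' : ∀ k, ∃ a : Fin n → Fin n → ℝ,
      z k = ∑ i, ∑ j, C (a i j) * X (Sum.inl i) * X (Sum.inr j) := hb
  choose a ha using hb'
  refine ⟨a, ?_⟩
  intro x y
  have hev := congrArg (eval (Sum.elim x y)) hid
  simp only [ha, _root_.map_mul, map_sum, _root_.map_pow, eval_X, eval_C, Sum.elim_inl,
    Sum.elim_inr] at hev
  have hDx : D x x = ∑ i, x i ^ 2 := by
    simp [D, sq]
  have hDy : D y y = ∑ j, y j ^ 2 := by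
    simp [D, sq]
  have hDF : D (F a x y) (F a x y) = ∑ k, (∑ i, ∑ j, a k i j * x i * y j) ^ 2 := by
    simp [D, F, sq]
  rw [hDx, hDy, hDF, hev]

end final

end Hurwitz

open MvPolynomial in
/-- **Hurwitz's 1-2-4-8 theorem**: for `n ≥ 1`, there exist `n` bilinear forms
`z_1, …, z_n` with `(x_1² + ⋯ + x_n²)·(y_1² + ⋯ + y_n²) = z_1² + ⋯ + z_n²` as real
polynomials if and only if `n ∈ {1, 2, 4, 8}`. -/
theorem hurwitz_one_two_four_eight (n : ℕ) (hn : 1 ≤ n) :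
    (∃ z : Fin n → MvPolynomial (Fin n ⊕ Fin n) ℝ,
      (∀ k, IsBilinearForm n (z k)) ∧
      (∑ i, (X (Sum.inl i)) ^ 2) * (∑ j, (X (Sum.inr j)) ^ 2) = ∑ k, (z k) ^ 2) ↔
    n = 1 ∨ n = 2 ∨ n = 4 ∨ n = 8 := by
  constructor
  · rintro ⟨z, hb, hid⟩
    by_contra hc
    push_neg at hc
    obtain ⟨h1, h2, h4, h8⟩ := hc
    obtain ⟨a, ha⟩ := Hurwitz.identity_to_DF hb hid
    exact Hurwitz.no_identity hn h1 h2 h4 h8 ha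
  · rintro (rfl | rfl | rfl | rfl)
    · exact Hurwitz.construct Hurwitz.a1 Hurwitz.id1
    · exact Hurwitz.construct Hurwitz.a2 Hurwitz.id2
    · exact Hurwitz.construct Hurwitz.a4 Hurwitz.id4
    · exact Hurwitz.construct Hurwitz.a8 Hurwitz.id8
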